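/- arXiv:1512.00918 — 3 statements merged into one kernel-verified Lean document; each statement's English description precedes it below -/
import Mathlib

section
/- Suppose x ≥ 2 and k is a positive integer with x^k < q. Then for any real number t and any complex numbers a(p) indexed by primes p, one has ∑_{χ mod q} |∑_{p ≤ x} χ(p) a(p) / p^{1/2 + it}|^{2k} ≤ φ(q) · k! · (∑_{p ≤ x} |a(p)|²/p)^k, where the outer sum runs over all Dirichlet characters modulo q and the inner sums run over primes p ≤ x. -/
open scoped Classical

lemma tuple_perm_of_prod_eq {k : ℕ} {τ σ : Fin k → ℕ}
    (hτ : ∀ i, (τ i).Prime) (hσ : ∀ i, (σ i).Prime)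
    (h : ∏ i, τ i = ∏ i, σ i) : ∃ π : Equiv.Perm (Fin k), σ = τ ∘ π := by
  have h1 : (List.ofFn τ).Perm (∏ i, τ i).primeFactorsList :=
    Nat.primeFactorsList_unique (by rw [List.prod_ofFn])
      (by simp only [List.mem_ofFn, Set.mem_range]; rintro p ⟨i, rfl⟩; exact hτ i)
  have h2 : (List.ofFn σ).Perm (∏ i, τ i).primeFactorsList :=
    Nat.primeFactorsList_unique (by rw [List.prod_ofFn, h])
      (by simp only [List.mem_ofFn, Set.mem_range]; rintro p ⟨i, rfl⟩; exact hσ i)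
  have hperm : (List.ofFn σ).Perm (List.ofFn τ) := h2.trans h1.symm
  have hs : List.ofFn (τ ∘ Tuple.sort τ) = List.ofFn (σ ∘ Tuple.sort σ) :=
    List.Perm.eq_of_sortedLE (Tuple.monotone_sort τ).sortedLE_ofFn
      (Tuple.monotone_sort σ).sortedLE_ofFn
      (((Tuple.sort τ).ofFn_comp_perm τ).trans
        (hperm.symm.trans ((Tuple.sort σ).ofFn_comp_perm σ).symm))
  have hfun : τ ∘ Tuple.sort τ = σ ∘ Tuple.sort σ := List.ofFn_injective hs
  refine ⟨Tuple.sort τ * (Tuple.sort σ)⁻¹, funext fun i => ?_⟩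
  have := congrFun hfun ((Tuple.sort σ)⁻¹ i)
  simpa using this.symm

lemma sum_char_mul_conj_char (q : ℕ) [NeZero q] (m n : ZMod q) :
    ∑ χ : DirichletCharacter ℂ q, χ m * (starRingEnd ℂ) (χ n) =
      if n = m ∧ IsUnit n then (q.totient : ℂ) else 0 := by
  by_cases hu : IsUnit n
  · obtain ⟨u, rfl⟩ := hu
    have hconj : ∀ χ : DirichletCharacter ℂ q, (starRingEnd ℂ) (χ ↑u) = χ (↑u)⁻¹ := by
      intro χ
      rw [starRingEnd_apply, MulChar.star_apply', MulChar.inv_apply, Ring.inverse_unit,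
        ZMod.inv_coe_unit]
    have h2 : ∑ χ : DirichletCharacter ℂ q, χ m * (starRingEnd ℂ) (χ ↑u)
        = ∑ χ : DirichletCharacter ℂ q, χ ((↑u : ZMod q))⁻¹ * χ m :=
      Finset.sum_congr rfl fun χ _ => by rw [hconj]; ring
    rw [h2, DirichletCharacter.sum_char_inv_mul_char_eq ℂ u.isUnit m]
    simp [eq_comm, u.isUnit]
  · have h0 : ∀ χ : DirichletCharacter ℂ q, χ m * (starRingEnd ℂ) (χ n) = 0 := by
      intro χ; rw [MulChar.map_nonunit χ hu, map_zero, mul_zero]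
    simp [h0, hu]

set_option linter.unusedVariables false in
set_option maxHeartbeats 1000000 in
/-- **Lemma 2.7, first part** (a `q`-analogue of Soundararajan's Lemma 3).
For `x ≥ 2` and a positive integer `k` with `x^k < q`, any real `t` and any complex
coefficients `a(p)`,
`∑_{χ mod q} |∑_{p ≤ x} χ(p)a(p)/p^{1/2+it}|^{2k} ≤ φ(q) k! (∑_{p ≤ x} |a(p)|²/p)^k`. -/
theorem character_moment_prime_sums (q : ℕ) [NeZero q] (x : ℝ) (hx : 2 ≤ x)
    (k : ℕ) (hk : 1 ≤ k) (hxk : x ^ k < (q : ℝ)) (t : ℝ) (a : ℕ → ℂ) :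
    ∑ χ : DirichletCharacter ℂ q,
        ‖∑ p ∈ (Finset.Iic ⌊x⌋₊).filter Nat.Prime,
            χ ((p : ℕ) : ZMod q) * a p /
              (p : ℂ) ^ ((1 / 2 : ℂ) + (t : ℂ) * Complex.I)‖ ^ (2 * k)
      ≤ (q.totient : ℝ) * (k.factorial : ℝ) *
          (∑ p ∈ (Finset.Iic ⌊x⌋₊).filter Nat.Prime,
            ‖a p‖ ^ 2 / (p : ℝ)) ^ k := by
  classical
  set P : Finset ℕ := (Finset.Iic ⌊x⌋₊).filter Nat.Prime with hPdef
  set s : ℂ := (1 / 2 : ℂ) + (t : ℂ) * Complex.I with hsdef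
  set f : ℕ → ℂ := fun p => a p / (p : ℂ) ^ s with hfdef
  set T : Finset (Fin k → ℕ) := Fintype.piFinset (fun _ => P) with hTdef
  set N : (Fin k → ℕ) → ℕ := fun τ => ∏ i, τ i with hNdef
  set F : (Fin k → ℕ) → ℂ := fun τ => ∏ i, f (τ i) with hFdef
  have hx0 : (0 : ℝ) ≤ x := by linarith
  have hmemP : ∀ p ∈ P, Nat.Prime p ∧ (p : ℝ) ≤ x := by
    intro p hp
    obtain ⟨h1, h2⟩ := Finset.mem_filter.mp hp
    exact ⟨h2, le_trans (Nat.cast_le.mpr (Finset.mem_Iic.mp h1)) (Nat.floor_le hx0)⟩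
  have hTprime : ∀ τ ∈ T, ∀ i, (τ i).Prime := fun τ hτ i =>
    (hmemP _ (Fintype.mem_piFinset.mp hτ i)).1
  have hNlt : ∀ τ ∈ T, N τ < q := by
    intro τ hτ
    have hle : ((N τ : ℕ) : ℝ) ≤ x ^ k := by
      rw [hNdef]
      push_cast
      calc ∏ i, ((τ i : ℝ)) ≤ ∏ _i : Fin k, x :=
            Finset.prod_le_prod (fun i _ => by positivity)
              (fun i _ => (hmemP _ (Fintype.mem_piFinset.mp hτ i)).2)
        _ = x ^ k := by rw [Finset.prod_const, Finset.card_univ, Fintype.card_fin]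
    exact_mod_cast lt_of_le_of_lt hle hxk
  have hcast : ∀ τ ∈ T, ∀ σ ∈ T,
      (((N σ : ℕ) : ZMod q) = ((N τ : ℕ) : ZMod q)) ↔ N σ = N τ := by
    intro τ hτ σ hσ
    constructor
    · intro h
      have := congrArg ZMod.val h
      rwa [ZMod.val_natCast_of_lt (hNlt σ hσ), ZMod.val_natCast_of_lt (hNlt τ hτ)] at this
    · intro h; rw [h]
  -- equal products give equal values
  have hFeq : ∀ τ ∈ T, ∀ σ ∈ T, N σ = N τ → F σ = F τ := by
    intro τ hτ σ hσ h
    obtain ⟨π, rfl⟩ := tuple_perm_of_prod_eq (hTprime τ hτ) (hTprime σ hσ) h.symm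
    exact Equiv.prod_comp π (fun i => f (τ i))
  -- fiber cardinality bound
  have hcard : ∀ τ ∈ T,
      (T.filter (fun σ => N σ = N τ ∧ IsUnit ((N σ : ℕ) : ZMod q))).card ≤ k.factorial := by
    intro τ hτ
    have hsub : T.filter (fun σ => N σ = N τ ∧ IsUnit ((N σ : ℕ) : ZMod q)) ⊆
        Finset.image (fun π : Equiv.Perm (Fin k) => τ ∘ π) Finset.univ := by
      intro σ hσ'
      obtain ⟨hσT, hNeq, -⟩ := Finset.mem_filter.mp hσ' |>.imp id (fun h => h)
      obtain ⟨π, rfl⟩ := tuple_perm_of_prod_eq (hTprime τ hτ) (hTprime σ hσT) hNeq.symm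
      exact Finset.mem_image.mpr ⟨π, Finset.mem_univ _, rfl⟩
    calc (T.filter _).card ≤ _ := Finset.card_le_card hsub
      _ ≤ (Finset.univ : Finset (Equiv.Perm (Fin k))).card := Finset.card_image_le
      _ = k.factorial := by rw [Finset.card_univ, Fintype.card_perm, Fintype.card_fin]
  -- expansion of the k-th power
  have expand : ∀ χ : DirichletCharacter ℂ q,
      (∑ p ∈ P, χ ((p : ℕ) : ZMod q) * a p / (p : ℂ) ^ s) ^ k
        = ∑ τ ∈ T, χ ((N τ : ℕ) : ZMod q) * F τ := by
    intro χ
    have h1 : ∀ p ∈ P, χ ((p : ℕ) : ZMod q) * a p / (p : ℂ) ^ s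
        = χ ((p : ℕ) : ZMod q) * f p := fun p _ => mul_div_assoc _ _ _
    rw [Finset.sum_congr rfl h1]
    calc (∑ p ∈ P, χ ((p : ℕ) : ZMod q) * f p) ^ k
        = ∏ _i : Fin k, ∑ p ∈ P, χ ((p : ℕ) : ZMod q) * f p := by
          rw [Finset.prod_const, Finset.card_univ, Fintype.card_fin]
      _ = ∑ τ ∈ T, ∏ i, χ ((τ i : ℕ) : ZMod q) * f (τ i) := Finset.prod_univ_sum _ _
      _ = ∑ τ ∈ T, χ ((N τ : ℕ) : ZMod q) * F τ := by
          refine Finset.sum_congr rfl fun τ _ => ?_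
          rw [Finset.prod_mul_distrib, ← map_prod, hNdef, hFdef, Nat.cast_prod]
  -- |z|^(2k) as real part
  have habs : ∀ z : ℂ, ‖z‖ ^ (2 * k) = (z ^ k * (starRingEnd ℂ) (z ^ k)).re := by
    intro z
    rw [Complex.mul_conj, Complex.ofReal_re, map_pow, pow_mul, Complex.sq_norm]
  -- the main identity
  have key : ∑ χ : DirichletCharacter ℂ q,
      ‖∑ p ∈ P, χ ((p : ℕ) : ZMod q) * a p / (p : ℂ) ^ s‖ ^ (2 * k)
      = ∑ τ ∈ T, ((T.filter (fun σ => N σ = N τ ∧ IsUnit ((N σ : ℕ) : ZMod q))).card : ℝ)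
          * ((q.totient : ℝ) * Complex.normSq (F τ)) := by
    calc ∑ χ : DirichletCharacter ℂ q, _
        = (∑ χ : DirichletCharacter ℂ q,
            (∑ τ ∈ T, χ ((N τ : ℕ) : ZMod q) * F τ) *
              (starRingEnd ℂ) (∑ σ ∈ T, χ ((N σ : ℕ) : ZMod q) * F σ)).re := by
          rw [Complex.re_sum]
          exact Finset.sum_congr rfl fun χ _ => by rw [habs, expand χ]
      _ = (∑ τ ∈ T, ∑ σ ∈ T, (if N σ = N τ ∧ IsUnit ((N σ : ℕ) : ZMod q)
              then (q.totient : ℂ) * (F τ * (starRingEnd ℂ) (F τ)) else 0)).re := by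
          congr 1
          have step1 : ∀ χ : DirichletCharacter ℂ q,
              (∑ τ ∈ T, χ ((N τ : ℕ) : ZMod q) * F τ) *
                (starRingEnd ℂ) (∑ σ ∈ T, χ ((N σ : ℕ) : ZMod q) * F σ)
              = ∑ τ ∈ T, ∑ σ ∈ T, (F τ * (starRingEnd ℂ) (F σ)) *
                  (χ ((N τ : ℕ) : ZMod q) * (starRingEnd ℂ) (χ ((N σ : ℕ) : ZMod q))) := by
            intro χ
            rw [map_sum, Finset.sum_mul_sum]
            exact Finset.sum_congr rfl fun τ _ => Finset.sum_congr rfl fun σ _ => by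
              rw [map_mul]; ring
          rw [Finset.sum_congr rfl fun χ _ => step1 χ, Finset.sum_comm]
          refine Finset.sum_congr rfl fun τ hτ => ?_
          rw [Finset.sum_comm]
          refine Finset.sum_congr rfl fun σ hσ => ?_
          rw [← Finset.mul_sum, sum_char_mul_conj_char]
          by_cases hc : N σ = N τ ∧ IsUnit ((N σ : ℕ) : ZMod q)
          · rw [if_pos ⟨(hcast τ hτ σ hσ).mpr hc.1, hc.2⟩, if_pos hc, hFeq τ hτ σ hσ hc.1]
            ring
          · rw [if_neg, if_neg hc, mul_zero]
            intro hc'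
            exact hc ⟨(hcast τ hτ σ hσ).mp hc'.1, hc'.2⟩
      _ = ∑ τ ∈ T, ((T.filter (fun σ => N σ = N τ ∧ IsUnit ((N σ : ℕ) : ZMod q))).card : ℝ)
            * ((q.totient : ℝ) * Complex.normSq (F τ)) := by
          rw [Complex.re_sum]
          refine Finset.sum_congr rfl fun τ _ => ?_
          rw [Complex.re_sum]
          have hval : ∀ σ, (if (N σ = N τ ∧ IsUnit ((N σ : ℕ) : ZMod q))
              then (q.totient : ℂ) * (F τ * (starRingEnd ℂ) (F τ)) else 0).re
              = if (N σ = N τ ∧ IsUnit ((N σ : ℕ) : ZMod q))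
                then (q.totient : ℝ) * Complex.normSq (F τ) else 0 := by
            intro σ
            split_ifs
            · rw [Complex.mul_conj, ← Complex.ofReal_natCast, ← Complex.ofReal_mul,
                Complex.ofReal_re]
            · exact Complex.zero_re
          rw [Finset.sum_congr rfl fun σ _ => hval σ, Finset.sum_ite, Finset.sum_const_zero,
            add_zero, Finset.sum_const, nsmul_eq_mul]
  rw [key]
  -- now the upper bound
  have hbound1 : ∑ τ ∈ T, ((T.filter (fun σ => N σ = N τ ∧ IsUnit ((N σ : ℕ) : ZMod q))).card : ℝ)
          * ((q.totient : ℝ) * Complex.normSq (F τ))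
      ≤ ∑ τ ∈ T, (k.factorial : ℝ) * ((q.totient : ℝ) * Complex.normSq (F τ)) := by
    refine Finset.sum_le_sum fun τ hτ => ?_
    refine mul_le_mul_of_nonneg_right ?_ (mul_nonneg (Nat.cast_nonneg _) (Complex.normSq_nonneg _))
    exact_mod_cast hcard τ hτ
  refine le_trans hbound1 ?_
  have hsum : ∑ τ ∈ T, Complex.normSq (F τ)
      = (∑ p ∈ P, ‖a p‖ ^ 2 / (p : ℝ)) ^ k := by
    have hfp : ∀ p ∈ P, Complex.normSq (f p) = ‖a p‖ ^ 2 / (p : ℝ) := by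
      intro p hp
      have hp' : (0 : ℝ) < p := by exact_mod_cast (hmemP p hp).1.pos
      have habs2 : ‖(p : ℂ) ^ s‖ = (p : ℝ) ^ ((1 : ℝ) / 2) := by
        rw [show ((p : ℕ) : ℂ) = (((p : ℕ) : ℝ) : ℂ) by push_cast; ring,
          Complex.norm_cpow_eq_rpow_re_of_pos hp']
        congr 1
        rw [hsdef]
        simp
      have hn : Complex.normSq ((p : ℂ) ^ s) = (p : ℝ) := by
        rw [← Complex.sq_norm, habs2, ← Real.rpow_natCast ((p : ℝ) ^ ((1:ℝ)/2)) 2,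
          ← Real.rpow_mul hp'.le]
        norm_num
      show Complex.normSq (a p / (p : ℂ) ^ s) = _
      rw [Complex.normSq_div, hn, Complex.normSq_eq_norm_sq]
    calc ∑ τ ∈ T, Complex.normSq (F τ)
        = ∑ τ ∈ T, ∏ i, Complex.normSq (f (τ i)) := by
          refine Finset.sum_congr rfl fun τ _ => ?_
          rw [hFdef]; exact map_prod Complex.normSq _ _
      _ = ∏ _i : Fin k, ∑ p ∈ P, Complex.normSq (f p) :=
          (Finset.prod_univ_sum (fun _ : Fin k => P) (fun _ p => Complex.normSq (f p))).symm
      _ = (∑ p ∈ P, Complex.normSq (f p)) ^ k := by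
          rw [Finset.prod_const, Finset.card_univ, Fintype.card_fin]
      _ = (∑ p ∈ P, ‖a p‖ ^ 2 / (p : ℝ)) ^ k := by
          rw [Finset.sum_congr rfl hfp]
  calc ∑ τ ∈ T, (k.factorial : ℝ) * ((q.totient : ℝ) * Complex.normSq (F τ))
      = (q.totient : ℝ) * (k.factorial : ℝ) * ∑ τ ∈ T, Complex.normSq (F τ) := by
        rw [Finset.mul_sum]
        exact Finset.sum_congr rfl fun τ _ => by ring
    _ = (q.totient : ℝ) * (k.factorial : ℝ)
          * (∑ p ∈ P, ‖a p‖ ^ 2 / (p : ℝ)) ^ k := by rw [hsum]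
    _ ≤ (q.totient : ℝ) * (k.factorial : ℝ)
          * (∑ p ∈ P, ‖a p‖ ^ 2 / (p : ℝ)) ^ k := le_rfl
end

section
/- Suppose x ≥ 2 and k is a positive integer with x^k < q, and let t be a real number and a(p) complex numbers indexed by primes. Then there exist nonnegative reals c_χ, indexed by the Dirichlet characters χ modulo q, with ∑_{χ mod q} c_χ = φ(q), such that for every character χ mod q one has |∑_{p ≤ x} χ(p) a(p)/p^{1/2 + it}|^{2k} ≤ c_χ · k! · (∑_{p ≤ x} |a(p)|²/p)^k. -/
open scoped Classical


open List in
lemma ofFn_perm_comp {k : ℕ} {α : Type*} [DecidableEq α] (f : Fin k → α) (σ : Equiv.Perm (Fin k)) :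
    (List.ofFn (f ∘ σ)).Perm (List.ofFn f) := by
  have h1 : List.ofFn (f ∘ σ) = (List.ofFn (σ : Fin k → Fin k)).map f := by
    rw [List.map_ofFn]
  have h2 : List.ofFn f = (List.finRange k).map f := by
    rw [← List.ofFn_id, List.map_ofFn]; rfl
  rw [h1, h2]
  refine List.Perm.map f ?_
  refine List.perm_of_nodup_nodup_toFinset_eq ?_ ?_ ?_
  · exact List.nodup_ofFn.mpr σ.injective
  · exact List.nodup_finRange k
  · ext i
    simp only [List.mem_toFinset, List.mem_finRange, iff_true]
    exact List.mem_ofFn.mpr ⟨σ.symm i, σ.apply_symm_apply i⟩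

lemma exists_perm_comp {k : ℕ} {v w : Fin k → ℕ} (hv : ∀ i, Nat.Prime (v i))
    (hw : ∀ i, Nat.Prime (w i)) (h : ∏ i, v i = ∏ i, w i) :
    ∃ σ : Equiv.Perm (Fin k), v ∘ σ = w := by
  have hperm : (List.ofFn v).Perm (List.ofFn w) := by
    have h1 : (List.ofFn v).prod = (List.ofFn w).prod := by
      rw [List.prod_ofFn, List.prod_ofFn]; exact h
    have hv' : ∀ p ∈ List.ofFn v, Nat.Prime p := by
      intro p hp; obtain ⟨i, rfl⟩ := List.mem_ofFn.mp hp; exact hv i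
    have hw' : ∀ p ∈ List.ofFn w, Nat.Prime p := by
      intro p hp; obtain ⟨i, rfl⟩ := List.mem_ofFn.mp hp; exact hw i
    exact (Nat.primeFactorsList_unique h1 hv').trans
      (Nat.primeFactorsList_unique rfl hw').symm
  have hsorted : v ∘ Tuple.sort v = w ∘ Tuple.sort w := by
    apply List.ofFn_injective
    have hp : (List.ofFn (v ∘ Tuple.sort v)).Perm (List.ofFn (w ∘ Tuple.sort w)) :=
      ((ofFn_perm_comp v (Tuple.sort v)).trans hperm).trans
        (ofFn_perm_comp w (Tuple.sort w)).symm
    have h1 : (List.ofFn (v ∘ Tuple.sort v)).SortedLE :=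
      List.sortedLE_ofFn_iff.mpr (Tuple.monotone_sort v)
    have h2 : (List.ofFn (w ∘ Tuple.sort w)).SortedLE :=
      List.sortedLE_ofFn_iff.mpr (Tuple.monotone_sort w)
    exact List.Perm.eq_of_sortedLE h1 h2 hp
  refine ⟨((Tuple.sort w)⁻¹).trans (Tuple.sort v), funext fun i => ?_⟩
  have := congrFun hsorted ((Tuple.sort w)⁻¹ i)
  simpa using this


lemma key_orth (q : ℕ) [NeZero q] (r s : ZMod q) :
    ∑ χ : DirichletCharacter ℂ q, χ r * (starRingEnd ℂ) (χ s) =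
      if r = s ∧ IsUnit s then (q.totient : ℂ) else 0 := by
  by_cases hs : IsUnit s
  · have hconj : ∀ χ : DirichletCharacter ℂ q, (starRingEnd ℂ) (χ s) = χ s⁻¹ := by
      intro χ
      have h1 : χ s⁻¹ * χ s = 1 := by
        rw [← map_mul, ZMod.inv_mul_of_unit s hs, map_one]
      have h2 : (starRingEnd ℂ) (χ s) * χ s = 1 := by
        rw [mul_comm, Complex.mul_conj]
        have : ‖χ s‖ = 1 := by
          simpa [hs.unit_spec] using χ.unit_norm_eq_one hs.unit
        norm_cast
        rw [Complex.normSq_eq_norm_sq]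
        simp [this]
      rw [eq_inv_of_mul_eq_one_left h2, ← eq_inv_of_mul_eq_one_left h1]
    calc ∑ χ : DirichletCharacter ℂ q, χ r * (starRingEnd ℂ) (χ s)
        = ∑ χ : DirichletCharacter ℂ q, χ s⁻¹ * χ r := by
          refine Finset.sum_congr rfl fun χ _ => ?_; rw [hconj, mul_comm]
      _ = if s = r then (q.totient : ℂ) else 0 :=
          DirichletCharacter.sum_char_inv_mul_char_eq ℂ hs r
      _ = if r = s ∧ IsUnit s then (q.totient : ℂ) else 0 := by
          rcases eq_or_ne r s with h | h <;> simp [h, hs, eq_comm]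
  · simp [MulChar.map_nonunit _ hs, hs]




lemma expand_pow_char (q : ℕ) [NeZero q] (k : ℕ) (P : Finset ℕ) (f : ℕ → ℂ)
    (χ : DirichletCharacter ℂ q) :
    (∑ p ∈ P, χ p * f p) ^ k =
      ∑ v ∈ Fintype.piFinset (fun _ : Fin k => P),
        χ ((∏ i, v i : ℕ) : ZMod q) * ∏ i, f (v i) := by
  calc (∑ p ∈ P, χ p * f p) ^ k
      = ∏ _i : Fin k, ∑ p ∈ P, χ p * f p := by
        rw [Finset.prod_const, Finset.card_univ, Fintype.card_fin]
    _ = ∑ v ∈ Fintype.piFinset (fun _ : Fin k => P), ∏ i, (χ (v i) * f (v i)) :=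
        Finset.prod_univ_sum _ _
    _ = ∑ v ∈ Fintype.piFinset (fun _ : Fin k => P),
          χ ((∏ i, v i : ℕ) : ZMod q) * ∏ i, f (v i) := by
        refine Finset.sum_congr rfl fun v _ => ?_
        rw [Finset.prod_mul_distrib, Nat.cast_prod, map_prod]


lemma moment_bound (q : ℕ) [NeZero q] (k : ℕ) (P : Finset ℕ)
    (hP : ∀ p ∈ P, Nat.Prime p)
    (hPq : ∀ v : Fin k → ℕ, (∀ i, v i ∈ P) → ∏ i, v i < q) (f : ℕ → ℂ) :
    ∑ χ : DirichletCharacter ℂ q, (‖∑ p ∈ P, χ p * f p‖) ^ (2 * k) ≤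
      (q.totient : ℝ) * (k.factorial : ℝ) * (∑ p ∈ P, ‖f p‖ ^ 2) ^ k := by
  set V := Fintype.piFinset (fun _ : Fin k => P) with hV
  set g : (Fin k → ℕ) → ℂ := fun v => ∏ i, f (v i) with hg
  set m : (Fin k → ℕ) → ℕ := fun v => ∏ i, v i with hm
  -- memberships
  have hmemV : ∀ v ∈ V, ∀ i, v i ∈ P := by
    intro v hv i; exact (Fintype.mem_piFinset.mp hv) i
  have hprimeV : ∀ v ∈ V, ∀ i, Nat.Prime (v i) := fun v hv i => hP _ (hmemV v hv i)
  have hltV : ∀ v ∈ V, m v < q := fun v hv => hPq v (hmemV v hv)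
  -- the filtered sets
  set A := (V ×ˢ V).filter (fun vw => ((m vw.1 : ZMod q) = (m vw.2 : ZMod q)) ∧
    IsUnit ((m vw.2 : ZMod q))) with hA
  set B := (V ×ˢ V).filter (fun vw => m vw.1 = m vw.2) with hB
  have hAB : A ⊆ B := by
    intro vw hvw
    rw [hA, Finset.mem_filter] at hvw
    rw [hB, Finset.mem_filter]
    refine ⟨hvw.1, ?_⟩
    have hmem := hvw.1
    have hcast := hvw.2.1
    rw [Finset.mem_product] at hmem
    have h1 := hltV _ hmem.1
    have h2 := hltV _ hmem.2
    have := congrArg ZMod.val hcast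
    rwa [ZMod.val_cast_of_lt h1, ZMod.val_cast_of_lt h2] at this
  -- complex identity
  have hTc : ((∑ χ : DirichletCharacter ℂ q, (‖∑ p ∈ P, χ p * f p‖) ^ (2 * k) : ℝ) : ℂ)
      = (q.totient : ℂ) * ∑ vw ∈ A, g vw.1 * (starRingEnd ℂ) (g vw.2) := by
    push_cast
    calc ∑ χ : DirichletCharacter ℂ q, ((‖∑ p ∈ P, χ p * f p‖ : ℂ)) ^ (2 * k)
        = ∑ χ : DirichletCharacter ℂ q,
            ((∑ p ∈ P, χ p * f p) ^ k) * (starRingEnd ℂ) ((∑ p ∈ P, χ p * f p) ^ k) := by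
          refine Finset.sum_congr rfl fun χ _ => ?_
          rw [Complex.mul_conj]
          norm_cast
          rw [Complex.normSq_eq_norm_sq, norm_pow, ← pow_mul, mul_comm k 2]
      _ = ∑ χ : DirichletCharacter ℂ q, ∑ v ∈ V, ∑ w ∈ V,
            (χ (m v : ZMod q) * (starRingEnd ℂ) (χ (m w : ZMod q))) *
              (g v * (starRingEnd ℂ) (g w)) := by
          refine Finset.sum_congr rfl fun χ _ => ?_
          rw [expand_pow_char, map_sum, Finset.sum_mul_sum]
          refine Finset.sum_congr rfl fun v _ => Finset.sum_congr rfl fun w _ => ?_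
          rw [map_mul]
          ring
      _ = ∑ v ∈ V, ∑ w ∈ V,
            (∑ χ : DirichletCharacter ℂ q, χ (m v : ZMod q) * (starRingEnd ℂ) (χ (m w : ZMod q))) *
              (g v * (starRingEnd ℂ) (g w)) := by
          rw [Finset.sum_comm]
          refine Finset.sum_congr rfl fun v _ => ?_
          rw [Finset.sum_comm]
          refine Finset.sum_congr rfl fun w _ => ?_
          rw [Finset.sum_mul]
      _ = ∑ v ∈ V, ∑ w ∈ V,
            (if ((m v : ZMod q) = (m w : ZMod q)) ∧ IsUnit ((m w : ZMod q))
              then (q.totient : ℂ) * (g v * (starRingEnd ℂ) (g w)) else 0) := by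
          refine Finset.sum_congr rfl fun v _ => Finset.sum_congr rfl fun w _ => ?_
          rw [key_orth]
          split_ifs <;> simp
      _ = (q.totient : ℂ) * ∑ vw ∈ A, g vw.1 * (starRingEnd ℂ) (g vw.2) := by
          rw [hA, Finset.sum_filter, Finset.mul_sum, ← Finset.sum_product']
          refine Finset.sum_congr rfl fun vw _ => ?_
          split_ifs <;> simp
  -- take real parts
  have hT : ∑ χ : DirichletCharacter ℂ q, (‖∑ p ∈ P, χ p * f p‖) ^ (2 * k)
      = (q.totient : ℝ) * (∑ vw ∈ A, g vw.1 * (starRingEnd ℂ) (g vw.2)).re := by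
    have := congrArg Complex.re hTc
    rwa [Complex.ofReal_re, show ((q.totient : ℕ) : ℂ) = ((q.totient : ℝ) : ℂ) from by
      norm_cast, Complex.re_ofReal_mul] at this
  -- |g w| = |g v| on equal products
  have habs_eq : ∀ vw ∈ B, ‖g vw.2‖ = ‖g vw.1‖ := by
    intro vw hvw
    rw [hB, Finset.mem_filter, Finset.mem_product] at hvw
    obtain ⟨⟨hv1, hv2⟩, heq⟩ := hvw
    obtain ⟨σ, hσ⟩ := exists_perm_comp (hprimeV _ hv1) (hprimeV _ hv2) heq
    calc ‖g vw.2‖ = ∏ i, ‖f (vw.2 i)‖ := by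
          rw [hg]; exact norm_prod _ _
      _ = ∏ i, ‖f (vw.1 (σ i))‖ := by rw [← hσ]; rfl
      _ = ∏ i, ‖f (vw.1 i)‖ := Equiv.prod_comp σ (fun j => ‖f (vw.1 j)‖)
      _ = ‖g vw.1‖ := (norm_prod _ _).symm
  -- bound the real part
  have h5 : (∑ vw ∈ A, g vw.1 * (starRingEnd ℂ) (g vw.2)).re
      ≤ ∑ vw ∈ B, ‖g vw.1‖ ^ 2 := by
    calc (∑ vw ∈ A, g vw.1 * (starRingEnd ℂ) (g vw.2)).re
        ≤ ‖∑ vw ∈ A, g vw.1 * (starRingEnd ℂ) (g vw.2)‖ := Complex.re_le_norm _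
      _ ≤ ∑ vw ∈ A, ‖g vw.1 * (starRingEnd ℂ) (g vw.2)‖ :=
          norm_sum_le _ _
      _ = ∑ vw ∈ A, ‖g vw.1‖ * ‖g vw.2‖ := by
          refine Finset.sum_congr rfl fun vw _ => ?_
          rw [norm_mul, Complex.norm_conj]
      _ ≤ ∑ vw ∈ B, ‖g vw.1‖ * ‖g vw.2‖ := by
          refine Finset.sum_le_sum_of_subset_of_nonneg hAB fun vw _ _ => ?_
          positivity
      _ = ∑ vw ∈ B, ‖g vw.1‖ ^ 2 := by
          refine Finset.sum_congr rfl fun vw hvw => ?_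
          rw [habs_eq vw hvw, sq]
  -- count multiplicities
  have hcard : ∀ v ∈ V, (V.filter fun w => m v = m w).card ≤ k.factorial := by
    intro v hv
    have hex : ∀ w ∈ V.filter fun w => m v = m w, ∃ σ : Equiv.Perm (Fin k), v ∘ σ = w := by
      intro w hw
      rw [Finset.mem_filter] at hw
      exact exists_perm_comp (hprimeV _ hv) (hprimeV _ hw.1) hw.2
    calc (V.filter fun w => m v = m w).card
        ≤ (Finset.univ : Finset (Equiv.Perm (Fin k))).card := by
          classical
          set F : (Fin k → ℕ) → Equiv.Perm (Fin k) := fun w =>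
            if hw : w ∈ V.filter fun w => m v = m w then Classical.choose (hex w hw) else 1
            with hF
          have hFspec : ∀ w (hw : w ∈ V.filter fun w => m v = m w), v ∘ (F w) = w := by
            intro w hw
            rw [hF]
            simp only [dif_pos hw]
            exact Classical.choose_spec (hex w hw)
          refine Finset.card_le_card_of_injOn F (fun _ _ => Finset.mem_univ _) ?_
          intro w hw w' hw' hww
          have e1 := hFspec w (Finset.mem_coe.mp hw)
          have e2 := hFspec w' (Finset.mem_coe.mp hw')
          rw [← e1, ← e2, hww]
      _ = k.factorial := by
          rw [Finset.card_univ, Fintype.card_perm, Fintype.card_fin]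
  -- sum over B
  have h7 : ∑ vw ∈ B, ‖g vw.1‖ ^ 2
      ≤ (k.factorial : ℝ) * ∑ v ∈ V, ‖g v‖ ^ 2 := by
    rw [hB, Finset.sum_filter, Finset.sum_product, Finset.mul_sum]
    refine Finset.sum_le_sum fun v hv => ?_
    calc (∑ w ∈ V, if m v = m w then ‖g v‖ ^ 2 else 0)
        = ∑ w ∈ V.filter fun w => m v = m w, ‖g v‖ ^ 2 :=
          (Finset.sum_filter _ _).symm
      _ = ((V.filter fun w => m v = m w).card : ℝ) * ‖g v‖ ^ 2 := by
          rw [Finset.sum_const, nsmul_eq_mul]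
      _ ≤ (k.factorial : ℝ) * ‖g v‖ ^ 2 := by
          have := hcard v hv
          have hnn : (0:ℝ) ≤ ‖g v‖ ^ 2 := by positivity
          exact mul_le_mul_of_nonneg_right (by exact_mod_cast this) hnn
  -- total square sum
  have h9 : ∑ v ∈ V, ‖g v‖ ^ 2 = (∑ p ∈ P, ‖f p‖ ^ 2) ^ k := by
    calc ∑ v ∈ V, ‖g v‖ ^ 2
        = ∑ v ∈ V, ∏ i, ‖f (v i)‖ ^ 2 := by
          refine Finset.sum_congr rfl fun v _ => ?_
          rw [hg]
          rw [norm_prod, ← Finset.prod_pow]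
      _ = ∏ _i : Fin k, ∑ p ∈ P, ‖f p‖ ^ 2 := by
          rw [Finset.prod_univ_sum (fun _ : Fin k => P) (fun _ p => ‖f p‖ ^ 2), hV]
      _ = (∑ p ∈ P, ‖f p‖ ^ 2) ^ k := by
          rw [Finset.prod_const, Finset.card_univ, Fintype.card_fin]
  -- combine
  rw [hT, mul_assoc]
  refine mul_le_mul_of_nonneg_left ?_ (Nat.cast_nonneg _)
  calc (∑ vw ∈ A, g vw.1 * (starRingEnd ℂ) (g vw.2)).re
      ≤ ∑ vw ∈ B, ‖g vw.1‖ ^ 2 := h5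
    _ ≤ (k.factorial : ℝ) * ∑ v ∈ V, ‖g v‖ ^ 2 := h7
    _ = (k.factorial : ℝ) * (∑ p ∈ P, ‖f p‖ ^ 2) ^ k := by rw [h9]


/-- **Lemma 2.7, second part.** For `x ≥ 2` and a positive integer `k` with `x^k < q`,
any real `t` and complex coefficients `a(p)`, there exist nonnegative reals `c_χ` with
`∑_{χ mod q} c_χ = φ(q)` such that for every character `χ` mod `q`,
`|∑_{p ≤ x} χ(p)a(p)/p^{1/2+it}|^{2k} ≤ c_χ k! (∑_{p ≤ x} |a(p)|²/p)^k`. -/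
theorem character_moment_prime_sums_pointwise (q : ℕ) [NeZero q] (x : ℝ) (hx : 2 ≤ x)
    (k : ℕ) (hk : 1 ≤ k) (hxk : x ^ k < (q : ℝ)) (t : ℝ) (a : ℕ → ℂ) :
    ∃ c : DirichletCharacter ℂ q → ℝ, (∀ χ, 0 ≤ c χ) ∧
      (∑ χ : DirichletCharacter ℂ q, c χ = (q.totient : ℝ)) ∧
      ∀ χ : DirichletCharacter ℂ q,
        ‖∑ p ∈ (Finset.Iic ⌊x⌋₊).filter Nat.Prime,
            χ ((p : ℕ) : ZMod q) * a p /
              (p : ℂ) ^ ((1 / 2 : ℂ) + (t : ℂ) * Complex.I)‖ ^ (2 * k)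
          ≤ c χ * (k.factorial : ℝ) *
              (∑ p ∈ (Finset.Iic ⌊x⌋₊).filter Nat.Prime,
                ‖a p‖ ^ 2 / (p : ℝ)) ^ k := by
  classical
  set P := (Finset.Iic ⌊x⌋₊).filter Nat.Prime with hPdef
  set f : ℕ → ℂ := fun p => a p / (p : ℂ) ^ ((1 / 2 : ℂ) + (t : ℂ) * Complex.I) with hf
  have hP : ∀ p ∈ P, Nat.Prime p := fun p hp => (Finset.mem_filter.mp hp).2
  have hPle : ∀ p ∈ P, (p : ℝ) ≤ x := by
    intro p hp
    have h1 : p ≤ ⌊x⌋₊ := Finset.mem_Iic.mp (Finset.mem_filter.mp hp).1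
    calc (p : ℝ) ≤ (⌊x⌋₊ : ℝ) := by exact_mod_cast h1
      _ ≤ x := Nat.floor_le (by linarith)
  have hPq : ∀ v : Fin k → ℕ, (∀ i, v i ∈ P) → ∏ i, v i < q := by
    intro v hv
    have h1 : ((∏ i, v i : ℕ) : ℝ) ≤ x ^ k := by
      push_cast
      calc ∏ i, (v i : ℝ) ≤ ∏ _i : Fin k, x :=
            Finset.prod_le_prod (fun i _ => by positivity) (fun i _ => hPle _ (hv i))
        _ = x ^ k := by rw [Finset.prod_const, Finset.card_univ, Fintype.card_fin]
    exact_mod_cast h1.trans_lt hxk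
  have habs : ∀ p ∈ P, ‖f p‖ ^ 2 = ‖a p‖ ^ 2 / (p : ℝ) := by
    intro p hp
    have hp2 : (0 : ℝ) < (p : ℝ) := by exact_mod_cast (hP p hp).pos
    have hz : ‖(p : ℂ) ^ ((1 / 2 : ℂ) + (t : ℂ) * Complex.I)‖
        = (p : ℝ) ^ ((2 : ℝ)⁻¹) := by
      rw [show ((p : ℕ) : ℂ) = (((p : ℝ) : ℝ) : ℂ) by norm_cast,
        Complex.norm_cpow_eq_rpow_re_of_pos hp2]
      norm_num
    rw [hf]
    rw [norm_div, hz, div_pow, ← Real.rpow_natCast ((p : ℝ) ^ ((2 : ℝ)⁻¹)) 2,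
      ← Real.rpow_mul hp2.le]
    norm_num
  have hSsum : ∑ p ∈ P, ‖a p‖ ^ 2 / (p : ℝ) = ∑ p ∈ P, ‖f p‖ ^ 2 :=
    Finset.sum_congr rfl fun p hp => (habs p hp).symm
  set S := ∑ p ∈ P, ‖f p‖ ^ 2 with hSdef
  have hS0 : 0 ≤ S := Finset.sum_nonneg fun p _ => by positivity
  set L : DirichletCharacter ℂ q → ℝ :=
    fun χ => ‖∑ p ∈ P, χ ((p : ℕ) : ZMod q) * f p‖ ^ (2 * k) with hL
  have hL0 : ∀ χ, 0 ≤ L χ := fun χ => by rw [hL]; positivity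
  have hgoalL : ∀ χ : DirichletCharacter ℂ q,
      ‖∑ p ∈ P, χ ((p : ℕ) : ZMod q) * a p /
        (p : ℂ) ^ ((1 / 2 : ℂ) + (t : ℂ) * Complex.I)‖ ^ (2 * k) = L χ := by
    intro χ
    rw [hL]
    congr 2
    exact Finset.sum_congr rfl fun p _ => by rw [hf, mul_div_assoc]
  have hmain : ∑ χ : DirichletCharacter ℂ q, L χ
      ≤ (q.totient : ℝ) * ((k.factorial : ℝ) * S ^ k) := by
    have := moment_bound q k P hP hPq f
    rw [← mul_assoc]
    exact this
  have hcard0 : (0 : ℝ) < (Fintype.card (DirichletCharacter ℂ q) : ℝ) := by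
    have : Nonempty (DirichletCharacter ℂ q) := ⟨1⟩
    exact_mod_cast Fintype.card_pos
  by_cases hS : S = 0
  · -- degenerate case
    refine ⟨fun _ => (q.totient : ℝ) / (Fintype.card (DirichletCharacter ℂ q) : ℝ),
      fun χ => by positivity, ?_, ?_⟩
    · rw [Finset.sum_const, Finset.card_univ, nsmul_eq_mul]
      field_simp
    · intro χ
      have hf0 : ∀ p ∈ P, f p = 0 := by
        intro p hp
        have h1 : ∀ p ∈ P, (0:ℝ) ≤ ‖f p‖ ^ 2 := fun p _ => by positivity
        have hS' : ∑ p ∈ P, ‖f p‖ ^ 2 = 0 := hS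
        have := (Finset.sum_eq_zero_iff_of_nonneg h1).mp hS' p hp
        have h2 : ‖f p‖ = 0 := by
          nlinarith [norm_nonneg (f p)]
        exact norm_eq_zero.mp h2
      have hzero : (∑ p ∈ P, χ ((p : ℕ) : ZMod q) * a p /
          (p : ℂ) ^ ((1 / 2 : ℂ) + (t : ℂ) * Complex.I)) = 0 := by
        refine Finset.sum_eq_zero fun p hp => ?_
        rw [mul_div_assoc,
          show (a p / ((p : ℕ) : ℂ) ^ ((1 / 2 : ℂ) + (t : ℂ) * Complex.I)) = f p from rfl,
          hf0 p hp, mul_zero]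
      rw [hzero, hSsum, hS]
      have h2k : 2 * k ≠ 0 := by omega
      rw [norm_zero, zero_pow h2k, zero_pow (by omega : k ≠ 0)]
      simp
  · have hSpos : 0 < S := lt_of_le_of_ne hS0 (Ne.symm hS)
    set D : ℝ := (k.factorial : ℝ) * S ^ k with hD
    have hDpos : 0 < D := by
      rw [hD]
      positivity
    set T : ℝ := ∑ χ : DirichletCharacter ℂ q, L χ with hT
    have hTD : T / D ≤ (q.totient : ℝ) := by
      rw [div_le_iff₀ hDpos]
      exact hmain
    refine ⟨fun χ => L χ / D + ((q.totient : ℝ) - T / D) /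
      (Fintype.card (DirichletCharacter ℂ q) : ℝ), fun χ => ?_, ?_, ?_⟩
    · have h1 : 0 ≤ L χ / D := div_nonneg (hL0 χ) hDpos.le
      have h2 : 0 ≤ ((q.totient : ℝ) - T / D) /
          (Fintype.card (DirichletCharacter ℂ q) : ℝ) :=
        div_nonneg (by linarith) hcard0.le
      linarith
    · rw [Finset.sum_add_distrib, ← Finset.sum_div, ← hT, Finset.sum_const,
        Finset.card_univ, nsmul_eq_mul]
      field_simp
      ring
    · intro χ
      rw [hgoalL χ, hSsum, mul_assoc, ← hD]
      have h2 : 0 ≤ ((q.totient : ℝ) - T / D) /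
          (Fintype.card (DirichletCharacter ℂ q) : ℝ) :=
        div_nonneg (by linarith) hcard0.le
      have h3 : L χ / D * D = L χ := div_mul_cancel₀ _ hDpos.ne'
      nlinarith [hDpos]
end

section
/- There is an absolute constant C such that for every real number a with 0 < |a| ≤ 1/100 and every z ≥ 3, ∑_{p ≤ z} cos(a · log p)/p ≤ log(min{1/|a|, log z}) + C, where the sum runs over primes p ≤ z. -/
namespace CosSumAux
open Finset Complex


noncomputable def Pz (x : ℝ) : Finset ℕ := (Finset.Iic ⌊x⌋₊).filter Nat.Prime

lemma mem_Pz {x : ℝ} (hx : 0 ≤ x) {p : ℕ} : p ∈ Pz x ↔ p.Prime ∧ (p : ℝ) ≤ x := by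
  simp only [Pz, Finset.mem_filter, Finset.mem_Iic, Nat.le_floor_iff hx, and_comm]

lemma theta_le {x : ℝ} (hx : 0 ≤ x) : ∑ p ∈ Pz x, Real.log p ≤ x * Real.log 4 := by
  have hr : Finset.range (⌊x⌋₊ + 1) = Finset.Iic ⌊x⌋₊ := by
    ext n; simp [Nat.lt_succ_iff]
  have hpos : 0 < primorial ⌊x⌋₊ := by
    rw [primorial]; exact Finset.prod_pos fun p hp => by
      simp only [Finset.mem_filter] at hp; exact hp.2.pos
  have h1 : ∑ p ∈ Pz x, Real.log p = Real.log (primorial ⌊x⌋₊) := by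
    rw [primorial, hr, Pz, Nat.cast_prod,
      Real.log_prod (fun p hp => by
        simp only [Finset.mem_filter] at hp
        exact_mod_cast hp.2.pos.ne')]
  rw [h1]
  calc Real.log (primorial ⌊x⌋₊) ≤ Real.log ((4:ℕ) ^ ⌊x⌋₊) := by
        apply Real.log_le_log (by exact_mod_cast hpos)
        exact_mod_cast primorial_le_4_pow ⌊x⌋₊
    _ = ⌊x⌋₊ * Real.log 4 := by push_cast [Real.log_pow]; ring
    _ ≤ x * Real.log 4 := by
        apply mul_le_mul_of_nonneg_right (Nat.floor_le hx)
        positivity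

lemma elog4_le : Real.exp 1 * Real.log 4 ≤ 4 := by
  have h4 : Real.log 4 = 2 * Real.log 2 := by
    rw [show (4:ℝ) = 2^2 by norm_num, Real.log_pow]; push_cast; ring
  nlinarith [Real.exp_one_lt_d9, Real.log_two_lt_d9, Real.log_two_gt_d9,
    Real.exp_one_gt_d9]

lemma mertens1 {z : ℝ} (hz : 3 ≤ z) : ∑ p ∈ Pz z, Real.log p / p ≤ 4 * (Real.log z + 1) := by
  have hz0 : (0:ℝ) < z := by linarith
  have hlogz : (0:ℝ) ≤ Real.log z := Real.log_nonneg (by linarith)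
  set K := ⌊Real.log z⌋₊ with hK
  set k : ℕ → ℕ := fun p => ⌊Real.log (z / (p:ℝ))⌋₊ with hk
  have hmaps : ∀ p ∈ Pz z, k p ∈ Finset.range (K + 1) := by
    intro p hp
    rw [mem_Pz hz0.le] at hp
    have hp0 : (0:ℝ) < p := by exact_mod_cast hp.1.pos
    have h2p : (2:ℝ) ≤ (p:ℝ) := by exact_mod_cast hp.1.two_le
    have h1 : z / p ≤ z := by
      rw [div_le_iff₀ hp0]; nlinarith
    simp only [Finset.mem_range, Nat.lt_succ_iff, hk]
    exact Nat.floor_le_floor (Real.log_le_log (by positivity) h1)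
  rw [← Finset.sum_fiberwise_of_maps_to hmaps]
  have hinner : ∀ j ∈ Finset.range (K + 1),
      ∑ p ∈ (Pz z).filter (fun p => k p = j), Real.log p / p ≤ 4 := by
    intro j _
    set B := z * Real.exp (-(j:ℝ)) with hB
    have hB0 : 0 < B := by positivity
    have hfib : ∀ p ∈ (Pz z).filter (fun p => k p = j),
        (p:ℝ) ≤ B ∧ 1 / (p:ℝ) ≤ Real.exp ((j:ℝ) + 1) / z := by
      intro p hp
      simp only [Finset.mem_filter] at hp
      obtain ⟨hp1, hj⟩ := hp
      rw [mem_Pz hz0.le] at hp1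
      have hp0 : (0:ℝ) < p := by exact_mod_cast hp1.1.pos
      have hp1' : (1:ℝ) ≤ z / p := by
        rw [le_div_iff₀ hp0]; linarith [hp1.2]
      have hlog0 : 0 ≤ Real.log (z / p) := Real.log_nonneg hp1'
      constructor
      · have h3 : (j:ℝ) ≤ Real.log (z / p) := by
          rw [← hj]; exact Nat.floor_le hlog0
        have h4 := Real.exp_le_exp.2 h3
        rw [Real.exp_log (by positivity)] at h4
        have h2 : Real.exp (j:ℝ) * p ≤ z := by
          rw [← le_div_iff₀ hp0]; exact h4
        rw [hB]
        calc (p:ℝ) = Real.exp (j:ℝ) * p * Real.exp (-(j:ℝ)) := by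
              rw [mul_comm (Real.exp (j:ℝ)) _, mul_assoc, ← Real.exp_add]; simp
          _ ≤ z * Real.exp (-(j:ℝ)) := mul_le_mul_of_nonneg_right h2 (Real.exp_nonneg _)
      · have h3 : Real.log (z / p) < (j:ℝ) + 1 := by
          rw [← hj]; push_cast; exact Nat.lt_floor_add_one _
        have h4 := Real.exp_le_exp.2 h3.le
        rw [Real.exp_log (by positivity)] at h4
        rw [div_le_div_iff₀ hp0 hz0, one_mul]
        rw [div_le_iff₀ hp0] at h4
        linarith
    calc ∑ p ∈ (Pz z).filter (fun p => k p = j), Real.log p / p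
        ≤ ∑ p ∈ (Pz z).filter (fun p => k p = j),
            (Real.exp ((j:ℝ) + 1) / z) * Real.log p := by
          apply Finset.sum_le_sum
          intro p hp
          have h := hfib p hp
          simp only [Finset.mem_filter] at hp
          have hp2 : (1:ℝ) ≤ (p:ℝ) := by
            exact_mod_cast ((mem_Pz hz0.le).1 hp.1).1.one_lt.le
          have hlp : 0 ≤ Real.log p := Real.log_nonneg hp2
          rw [div_eq_mul_one_div, mul_comm (Real.log (p:ℝ)) _]
          exact mul_le_mul_of_nonneg_right h.2 hlp
      _ = (Real.exp ((j:ℝ) + 1) / z) * ∑ p ∈ (Pz z).filter (fun p => k p = j),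
            Real.log p := by rw [Finset.mul_sum]
      _ ≤ (Real.exp ((j:ℝ) + 1) / z) * (B * Real.log 4) := by
          apply mul_le_mul_of_nonneg_left _ (by positivity)
          refine le_trans (Finset.sum_le_sum_of_subset_of_nonneg ?_ ?_) (theta_le hB0.le)
          · intro p hp
            have h1 := (hfib p hp).1
            simp only [Finset.mem_filter] at hp
            rw [mem_Pz hB0.le]
            exact ⟨((mem_Pz hz0.le).1 hp.1).1, h1⟩
          · intro p hp _
            have hp2 : (1:ℝ) ≤ (p:ℝ) := by
              exact_mod_cast ((mem_Pz hB0.le).1 hp).1.one_lt.le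
            exact Real.log_nonneg hp2
      _ = Real.exp 1 * Real.log 4 := by
          rw [hB, Real.exp_add, Real.exp_neg]
          have := (Real.exp_pos (j:ℝ)).ne'
          field_simp
      _ ≤ 4 := elog4_le
  calc ∑ j ∈ Finset.range (K + 1), ∑ p ∈ (Pz z).filter (fun p => k p = j),
        Real.log p / p ≤ ∑ j ∈ Finset.range (K + 1), (4:ℝ) := Finset.sum_le_sum hinner
    _ = (K + 1) * 4 := by rw [Finset.sum_const, Finset.card_range]; push_cast; ring
    _ ≤ 4 * (Real.log z + 1) := by
        have : (K:ℝ) ≤ Real.log z := Nat.floor_le hlogz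
        linarith

lemma tail_le {z : ℝ} (hz : 3 ≤ z) (G : Finset ℕ) (hG : ∀ q ∈ G, Nat.Prime q ∧ z < q) :
    ∑ q ∈ G, (q:ℝ) ^ (-(1 + 1/Real.log z)) ≤ 4 := by
  have hz0 : (0:ℝ) < z := by linarith
  have hz1 : (1:ℝ) < z := by linarith
  have hlogz : (0:ℝ) < Real.log z := Real.log_pos hz1
  set δ : ℝ := 1 / Real.log z with hδ
  have hδ0 : 0 < δ := by positivity
  have hδ1 : δ ≤ 1 := by
    rw [hδ, div_le_one hlogz]
    calc (1:ℝ) = Real.log (Real.exp 1) := (Real.log_exp 1).symm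
      _ ≤ Real.log z := Real.log_le_log (Real.exp_pos 1) (by
          linarith [Real.exp_one_lt_d9])
  have hδlog : δ * Real.log z = 1 := by
    rw [hδ]; field_simp
  set σ : ℝ := 1 + δ with hσ
  set k : ℕ → ℕ := fun q => ⌊Real.log (q / z)⌋₊ with hk
  set N : ℕ := G.sup k + 1 with hN
  have hmaps : ∀ q ∈ G, k q ∈ Finset.range N := by
    intro q hq
    simp only [Finset.mem_range, hN, Nat.lt_succ_iff]
    exact Finset.le_sup hq
  rw [← Finset.sum_fiberwise_of_maps_to hmaps]
  set r : ℝ := Real.exp (-δ) with hr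
  have hr0 : 0 ≤ r := Real.exp_nonneg _
  have hr1 : r < 1 := by
    rw [hr, Real.exp_lt_one_iff]; linarith
  have hinner : ∀ j ∈ Finset.range N,
      ∑ q ∈ G.filter (fun q => k q = j), (q:ℝ) ^ (-σ)
        ≤ (Real.log 4 / Real.log z) * r ^ j := by
    intro j _
    set A := z * Real.exp (j:ℝ) with hA
    have hA0 : 0 < A := by positivity
    have hA1 : 1 < A := by
      rw [hA]; nlinarith [Real.exp_pos (j:ℝ), Real.one_le_exp (Nat.cast_nonneg j : (0:ℝ) ≤ j)]
    have hfib : ∀ q ∈ G.filter (fun q => k q = j),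
        A ≤ (q:ℝ) ∧ (q:ℝ) ≤ z * Real.exp ((j:ℝ) + 1) := by
      intro q hq
      simp only [Finset.mem_filter] at hq
      obtain ⟨hq1, hj⟩ := hq
      obtain ⟨hqp, hqz⟩ := hG q hq1
      have hq0 : (0:ℝ) < q := by exact_mod_cast hqp.pos
      have h1 : (1:ℝ) ≤ (q:ℝ) / z := by
        rw [le_div_iff₀ hz0]; linarith
      have hlog0 : 0 ≤ Real.log ((q:ℝ) / z) := Real.log_nonneg h1
      constructor
      · have h3 : (j:ℝ) ≤ Real.log ((q:ℝ) / z) := by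
          rw [← hj]; exact Nat.floor_le hlog0
        have h4 := Real.exp_le_exp.2 h3
        rw [Real.exp_log (by positivity)] at h4
        rw [le_div_iff₀ hz0] at h4
        rw [hA]; nlinarith [Real.exp_pos (j:ℝ)]
      · have h3 : Real.log ((q:ℝ) / z) < (j:ℝ) + 1 := by
          rw [← hj]; exact Nat.lt_floor_add_one _
        have h4 := Real.exp_le_exp.2 h3.le
        rw [Real.exp_log (by positivity), div_le_iff₀ hz0] at h4
        linarith
    have hcard : ((G.filter (fun q => k q = j)).card : ℝ) * Real.log z
        ≤ z * Real.exp ((j:ℝ) + 1) * Real.log 4 := by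
      calc ((G.filter (fun q => k q = j)).card : ℝ) * Real.log z
          ≤ ∑ q ∈ G.filter (fun q => k q = j), Real.log q := by
            have := Finset.card_nsmul_le_sum (G.filter (fun q => k q = j))
              (fun q => Real.log q) (Real.log z) (fun q hq => by
                have hqz := (hG q (Finset.mem_filter.1 hq).1).2
                exact Real.log_le_log hz0 hqz.le)
            rwa [nsmul_eq_mul] at this
        _ ≤ z * Real.exp ((j:ℝ) + 1) * Real.log 4 := by
            refine le_trans (Finset.sum_le_sum_of_subset_of_nonneg ?_ ?_)
              (theta_le (by positivity))
            · intro q hq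
              have h := (hfib q hq).2
              simp only [Finset.mem_filter] at hq
              rw [mem_Pz (by positivity)]
              exact ⟨(hG q hq.1).1, h⟩
            · intro q hq _
              have hq1 : (1:ℝ) ≤ (q:ℝ) := by
                exact_mod_cast ((mem_Pz (by positivity : (0:ℝ) ≤ z * Real.exp ((j:ℝ)+1))).1 hq).1.one_lt.le
              exact Real.log_nonneg hq1
    have hA' : Real.log A = Real.log z + j := by
      rw [hA, Real.log_mul hz0.ne' (Real.exp_pos _).ne', Real.log_exp]
    have hz_exp : z * Real.exp ((j:ℝ)+1) = Real.exp (Real.log z + ((j:ℝ)+1)) := by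
      rw [Real.exp_add, Real.exp_add, Real.exp_log hz0, Real.exp_add]
    have hrj : r ^ j = Real.exp (-δ * j) := by
      rw [hr, ← Real.exp_nat_mul]; ring_nf
    have hexp : (z * Real.exp ((j:ℝ)+1)) * A ^ (-σ) = r ^ j := by
      rw [Real.rpow_def_of_pos hA0, hA', hz_exp, ← Real.exp_add, hrj]
      congr 1
      rw [hσ]
      linear_combination -hδlog
    have hAσ : 0 ≤ A ^ (-σ) := Real.rpow_nonneg hA0.le _
    calc ∑ q ∈ G.filter (fun q => k q = j), (q:ℝ) ^ (-σ)
        ≤ ∑ q ∈ G.filter (fun q => k q = j), A ^ (-σ) := by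
          apply Finset.sum_le_sum
          intro q hq
          have h := (hfib q hq).1
          have hσ0 : (0:ℝ) < σ := by rw [hσ]; linarith
          exact Real.rpow_le_rpow_of_nonpos hA0 h (by linarith)
      _ = ((G.filter (fun q => k q = j)).card : ℝ) * A ^ (-σ) := by
          rw [Finset.sum_const, nsmul_eq_mul]
      _ ≤ ((z * Real.exp ((j:ℝ)+1) * Real.log 4) / Real.log z) * A ^ (-σ) := by
          apply mul_le_mul_of_nonneg_right _ hAσ
          rw [le_div_iff₀ hlogz]
          exact hcard
      _ = (Real.log 4 / Real.log z) * r ^ j := by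
          rw [← hexp]; ring
  have hgeom : ∑ j ∈ Finset.range N, r ^ j ≤ (1 - r)⁻¹ := by
    refine le_trans (Summable.sum_le_tsum (L := SummationFilter.unconditional ℕ) (Finset.range N) (fun j _ => pow_nonneg hr0 j) ?_) ?_
    · exact summable_geometric_of_lt_one hr0 hr1
    · rw [tsum_geometric_of_lt_one hr0 hr1]
  have h5 : Real.exp (-1:ℝ) * δ ≤ 1 - r := by
    have h6 : δ + 1 ≤ Real.exp δ := Real.add_one_le_exp δ
    have h7 : Real.exp (-1:ℝ) ≤ Real.exp (-δ) := Real.exp_le_exp.2 (by linarith)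
    have h8 : Real.exp (-δ) * Real.exp δ = 1 := by rw [← Real.exp_add]; simp
    nlinarith [Real.exp_pos (-δ)]
  have h9 : (1 - r)⁻¹ ≤ Real.exp 1 * Real.log z := by
    have h10 : 0 < Real.exp (-1:ℝ) * δ := by positivity
    have := inv_anti₀ h10 h5
    calc (1-r)⁻¹ ≤ (Real.exp (-1:ℝ) * δ)⁻¹ := this
      _ = Real.exp 1 * Real.log z := by
          rw [hδ, Real.exp_neg]
          field_simp
  calc ∑ j ∈ Finset.range N, ∑ q ∈ G.filter (fun q => k q = j), (q:ℝ) ^ (-σ)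
      ≤ ∑ j ∈ Finset.range N, (Real.log 4 / Real.log z) * r ^ j := Finset.sum_le_sum hinner
    _ = (Real.log 4 / Real.log z) * ∑ j ∈ Finset.range N, r ^ j := by rw [Finset.mul_sum]
    _ ≤ (Real.log 4 / Real.log z) * (1 - r)⁻¹ := by
        apply mul_le_mul_of_nonneg_left hgeom
        positivity
    _ ≤ (Real.log 4 / Real.log z) * (Real.exp 1 * Real.log z) := by
        apply mul_le_mul_of_nonneg_left h9
        positivity
    _ = Real.exp 1 * Real.log 4 := by field_simp
    _ ≤ 4 := elog4_le


lemma zeta_bound : ∃ C : ℝ, 1 ≤ C ∧ ∀ s : ℂ, 1 < s.re → s.re ≤ 2 → 0 < |s.im| →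
    |s.im| ≤ 1/100 → ‖riemannZeta s‖ ≤ C / ‖s - 1‖ := by
  have hbig := isBigO_riemannZeta_sub_one_div (F := ℂ)
  rw [Asymptotics.isBigO_iff] at hbig
  obtain ⟨C₀, hC₀⟩ := hbig
  rw [Metric.eventually_nhds_iff] at hC₀
  obtain ⟨ε₀, hε₀, hball⟩ := hC₀
  set ε := min ε₀ (1/2) with hε
  have hεpos : 0 < ε := lt_min hε₀ (by norm_num)
  have hε2 : ε ≤ 1/2 := min_le_right _ _
  -- compact region
  set K : Set ℂ := {s : ℂ | 1 ≤ s.re ∧ s.re ≤ 2 ∧ |s.im| ≤ 1/100 ∧ ε ≤ ‖s - 1‖} with hKdef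
  have hKclosed : IsClosed K := by
    apply IsClosed.inter
    · exact isClosed_le continuous_const Complex.continuous_re
    apply IsClosed.inter
    · exact isClosed_le Complex.continuous_re continuous_const
    apply IsClosed.inter
    · exact isClosed_le (Complex.continuous_im.abs) continuous_const
    · exact isClosed_le continuous_const ((continuous_id.sub continuous_const).norm)
  have hKbdd : Bornology.IsBounded K := by
    apply Bornology.IsBounded.subset (Metric.isBounded_closedBall (x := (0:ℂ)) (r := 3))
    intro s hs
    obtain ⟨h1, h2, h3, _⟩ := hs
    simp only [Metric.mem_closedBall, Complex.dist_eq, sub_zero]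
    calc ‖s‖ ≤ |s.re| + |s.im| := Complex.norm_le_abs_re_add_abs_im s
      _ ≤ 2 + 1/100 := by
          apply add_le_add _ h3
          rw [abs_le]; constructor <;> linarith
      _ ≤ 3 := by norm_num
  have hKcompact : IsCompact K := Metric.isCompact_of_isClosed_isBounded hKclosed hKbdd
  have hKne1 : ∀ s ∈ K, s ≠ 1 := by
    intro s hs h1
    obtain ⟨_, _, _, h4⟩ := hs
    rw [h1] at h4; simp at h4; linarith
  have hcont : ContinuousOn riemannZeta K := fun s hs =>
    (differentiableAt_riemannZeta (hKne1 s hs)).continuousAt.continuousWithinAt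
  obtain ⟨M, hM⟩ := hKcompact.exists_bound_of_continuousOn hcont
  set C : ℝ := max (max (1 + |C₀|) (2 * max M 1)) 1 with hC
  refine ⟨C, le_max_right _ _, ?_⟩
  intro s hre1 hre2 him0 him
  have hs1 : s ≠ 1 := by
    intro h; rw [h] at him0; simp at him0
  have hd0 : 0 < ‖s - 1‖ := by
    rw [norm_pos_iff]; exact sub_ne_zero.2 hs1
  have hd2 : ‖s - 1‖ ≤ 2 := by
    calc ‖s - 1‖ ≤ |(s-1).re| + |(s-1).im| := Complex.norm_le_abs_re_add_abs_im _
      _ ≤ 1 + 1/100 := by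
          apply add_le_add
          · simp only [Complex.sub_re, Complex.one_re]
            rw [abs_le]; constructor <;> linarith
          · simpa using him
      _ ≤ 2 := by norm_num
  by_cases hcase : ‖s - 1‖ < ε
  · -- near 1
    have hball' := hball (y := s) (by
      rw [Complex.dist_eq]
      exact lt_of_lt_of_le hcase (min_le_left _ _))
    simp only [norm_one, mul_one] at hball'
    have h1 : ‖riemannZeta s‖ ≤ 1/‖s-1‖ + C₀ := by
      calc ‖riemannZeta s‖ = ‖(riemannZeta s - 1/(s-1)) + 1/(s-1)‖ := by
            rw [sub_add_cancel]
        _ ≤ ‖riemannZeta s - 1/(s-1)‖ + ‖(1:ℂ)/(s-1)‖ := norm_add_le _ _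
        _ ≤ C₀ + 1/‖s-1‖ := by
            rw [norm_div, norm_one]
            linarith [hball']
        _ = 1/‖s-1‖ + C₀ := by ring
    have hsε : ‖s-1‖ ≤ 1 := le_trans hcase.le (by linarith)
    calc ‖riemannZeta s‖ ≤ 1/‖s-1‖ + C₀ := h1
      _ = (1 + C₀*‖s-1‖)/‖s-1‖ := by
          rw [eq_div_iff hd0.ne', add_mul, div_mul_cancel₀ _ hd0.ne']
      _ ≤ C/‖s-1‖ := by
          have h3 : C₀ * ‖s-1‖ ≤ |C₀| := by
            calc C₀ * ‖s-1‖ ≤ |C₀| * ‖s-1‖ :=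
                  mul_le_mul_of_nonneg_right (le_abs_self _) hd0.le
              _ ≤ |C₀| * 1 := mul_le_mul_of_nonneg_left hsε (abs_nonneg _)
              _ = |C₀| := mul_one _
          have h4 : 1 + |C₀| ≤ C := le_trans (le_max_left _ _) (le_max_left _ _)
          rw [div_le_div_iff_of_pos_right hd0]
          linarith
  · -- in compact region
    have hsK : s ∈ K := ⟨hre1.le, hre2, him, not_lt.1 hcase⟩
    have h1 : ‖riemannZeta s‖ ≤ max M 1 := le_trans (hM s hsK) (le_max_left _ _)
    calc ‖riemannZeta s‖ ≤ max M 1 := h1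
      _ ≤ (2 * max M 1) / ‖s-1‖ := by
          rw [le_div_iff₀ hd0]
          have hM1 : (1:ℝ) ≤ max M 1 := le_max_right _ _
          nlinarith [mul_le_mul_of_nonneg_left hd2 (by linarith : (0:ℝ) ≤ max M 1)]
      _ ≤ C / ‖s-1‖ := by
          rw [div_le_div_iff_of_pos_right hd0]
          exact le_trans (le_max_right _ _) (le_max_left _ _)


lemma norm_primes_cpow {s : ℂ} (p : Nat.Primes) :
    ‖((p : ℕ) : ℂ) ^ (-s)‖ = ((p:ℕ):ℝ) ^ (-s.re) := by
  have hp0 : (0:ℝ) < ((p:ℕ):ℝ) := by exact_mod_cast p.prop.pos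
  rw [show (((p:ℕ):ℂ)) = ((((p:ℕ):ℝ)):ℂ) by push_cast; rfl]
  rw [Complex.norm_cpow_eq_rpow_re_of_pos hp0]
  simp

lemma summable_primes_cpow {s : ℂ} (h1 : 1 < s.re) :
    Summable (fun p : Nat.Primes => ((p : ℕ) : ℂ) ^ (-s)) := by
  apply Summable.of_norm
  simp only [norm_primes_cpow]
  exact Nat.Primes.summable_rpow.2 (by linarith)

lemma re_tsum_primes_le {s : ℂ} (h1 : 1 < s.re) :
    (∑' p : Nat.Primes, ((p : ℕ) : ℂ) ^ (-s)).re
      ≤ Real.log (‖riemannZeta s‖) + 2 := by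
  set g : Nat.Primes → ℂ := fun p => ((p : ℕ) : ℂ) ^ (-s) with hg
  have hgsum : Summable g := summable_primes_cpow h1
  set L : Nat.Primes → ℂ := fun p => -Complex.log (1 - g p) with hL
  have hLsum : Summable L := hgsum.clog_one_sub.neg
  set R : Nat.Primes → ℂ := fun p => L p - g p with hR
  have hRsum : Summable R := hLsum.sub hgsum
  -- norm bounds
  have hnorm : ∀ p : Nat.Primes, ‖g p‖ ≤ 1/2 ∧ ‖g p‖ ^ 2 ≤ ((p:ℕ):ℝ) ^ (-2:ℝ) := by
    intro p
    have hp2 : (2:ℝ) ≤ ((p:ℕ):ℝ) := by exact_mod_cast p.prop.two_le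
    have hp1 : (1:ℝ) ≤ ((p:ℕ):ℝ) := by linarith
    have h2 : ‖g p‖ = ((p:ℕ):ℝ) ^ (-s.re) := norm_primes_cpow p
    have h3 : ((p:ℕ):ℝ) ^ (-s.re) ≤ ((p:ℕ):ℝ) ^ (-1:ℝ) :=
      Real.rpow_le_rpow_of_exponent_le hp1 (by linarith)
    have h4 : ((p:ℕ):ℝ) ^ (-1:ℝ) ≤ 1/2 := by
      rw [Real.rpow_neg_one]
      rw [inv_le_comm₀ (by linarith) (by norm_num)]
      simpa using hp2
    constructor
    · rw [h2]; linarith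
    · rw [h2]
      have heq : ((p:ℕ):ℝ) ^ (-2:ℝ) = (((p:ℕ):ℝ) ^ (-1:ℝ))^2 := by
        rw [← Real.rpow_natCast (((p:ℕ):ℝ)^(-1:ℝ)) 2, ← Real.rpow_mul (by linarith)]
        norm_num
      rw [heq]
      exact pow_le_pow_left₀ (Real.rpow_nonneg (by linarith) _) h3 2
  have hRb : ∀ p : Nat.Primes, ‖R p‖ ≤ ((p:ℕ):ℝ) ^ (-2:ℝ) := by
    intro p
    obtain ⟨hhalf, hsq⟩ := hnorm p
    have hlt1 : ‖g p‖ < 1 := lt_of_le_of_lt hhalf (by norm_num)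
    have harg : (1 - g p).arg ≠ Real.pi :=
      Complex.slitPlane_arg_ne_pi (by
        have := Complex.mem_slitPlane_of_norm_lt_one (z := -g p) (by simpa using hlt1)
        simpa [sub_eq_add_neg] using this)
    have hlogeq : L p = Complex.log (1 - g p)⁻¹ := by
      rw [hL, Complex.log_inv _ harg]
    have key := Complex.norm_log_one_sub_inv_sub_self_le (z := g p) hlt1
    have : ‖R p‖ ≤ ‖g p‖^2 * (1 - ‖g p‖)⁻¹ / 2 := by
      rw [hR]; simp only
      rw [hlogeq]
      exact key
    calc ‖R p‖ ≤ ‖g p‖^2 * (1 - ‖g p‖)⁻¹ / 2 := this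
      _ ≤ ‖g p‖^2 * 2 / 2 := by
          apply div_le_div_of_nonneg_right ?_ (by norm_num) |>.trans_eq rfl
          apply mul_le_mul_of_nonneg_left _ (sq_nonneg _)
          rw [inv_le_comm₀ (by linarith) (by norm_num)]
          linarith
      _ = ‖g p‖^2 := by ring
      _ ≤ ((p:ℕ):ℝ) ^ (-2:ℝ) := hsq
  have hsum2 : Summable (fun p : Nat.Primes => ((p:ℕ):ℝ) ^ (-2:ℝ)) :=
    Nat.Primes.summable_rpow.2 (by norm_num)
  have hRnormsum : Summable (fun p => ‖R p‖) :=
    Summable.of_nonneg_of_le (fun p => norm_nonneg _) hRb hsum2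
  -- tsum of p^{-2} over primes ≤ 2
  have hp2sum : ∑' p : Nat.Primes, ((p:ℕ):ℝ) ^ (-2:ℝ) ≤ 2 := by
    have hinj : Function.Injective (fun p : Nat.Primes => (p : ℕ)) := Nat.Primes.coe_nat_injective
    have hle : ∑' p : Nat.Primes, ((p:ℕ):ℝ) ^ (-2:ℝ) ≤ ∑' n : ℕ, (n:ℝ) ^ (-2:ℝ) := by
      apply Summable.tsum_le_tsum_of_inj _ hinj
      · intro n _
        positivity
      · intro p; exact le_rfl
      · exact hsum2
      · exact Real.summable_nat_rpow.2 (by norm_num)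
    have hval : ∑' n : ℕ, (n:ℝ) ^ (-2:ℝ) = Real.pi^2/6 := by
      have h := hasSum_zeta_two
      rw [← h.tsum_eq]
      apply tsum_congr
      intro n
      rcases Nat.eq_zero_or_pos n with h0 | h0
      · subst h0; simp [Real.zero_rpow]
      · rw [Real.rpow_neg (by positivity), show ((2:ℝ)) = ((2:ℕ):ℝ) by norm_num,
          Real.rpow_natCast]
        simp [one_div]
    have : Real.pi^2/6 ≤ 2 := by nlinarith [Real.pi_lt_d2, Real.pi_gt_three]
    linarith [hle.trans_eq hval]
  -- the main identity
  have hζ := riemannZeta_eulerProduct_exp_log h1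
  have habs : ‖riemannZeta s‖ = Real.exp ((∑' p, L p).re) := by
    rw [← hζ, Complex.norm_exp]
  have hlogζ : Real.log (‖riemannZeta s‖) = (∑' p, L p).re := by
    rw [habs, Real.log_exp]
  have hsplit : ∑' p, g p = (∑' p, L p) - ∑' p, R p := by
    rw [← Summable.tsum_sub hLsum hRsum]
    apply tsum_congr
    intro p
    rw [hR]; ring
  rw [hsplit, Complex.sub_re, hlogζ]
  have hRre : |(∑' p, R p).re| ≤ 2 := by
    calc |(∑' p, R p).re| ≤ ‖∑' p, R p‖ := Complex.abs_re_le_norm _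
      _ ≤ ∑' p, ‖R p‖ := by
          exact norm_tsum_le_tsum_norm hRnormsum
      _ ≤ ∑' p : Nat.Primes, ((p:ℕ):ℝ) ^ (-2:ℝ) := Summable.tsum_le_tsum hRb hRnormsum hsum2
      _ ≤ 2 := hp2sum
  have := abs_le.1 hRre
  linarith


lemma cpow_re_eq {n : ℕ} (hn : 0 < n) (σ a : ℝ) :
    (((n:ℕ) : ℂ) ^ (-((σ:ℂ) + (a:ℂ)*I))).re
      = (n:ℝ) ^ (-σ) * Real.cos (a * Real.log n) := by
  have hx0 : (0:ℝ) < (n:ℝ) := by exact_mod_cast hn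
  have hne : ((n:ℕ):ℂ) ≠ 0 := by exact_mod_cast hn.ne'
  rw [Complex.cpow_def_of_ne_zero hne]
  have hlog : Complex.log ((n:ℕ):ℂ) = ((Real.log n : ℝ) : ℂ) := by
    rw [show ((n:ℕ):ℂ) = (((n:ℝ)):ℂ) by push_cast; rfl]
    exact (Complex.ofReal_log hx0.le).symm
  rw [hlog, Complex.exp_re]
  have hre : (((Real.log n : ℝ) : ℂ) * -((σ:ℂ) + (a:ℂ)*I)).re = -(σ * Real.log n) := by
    simp only [Complex.mul_re, Complex.mul_im, Complex.ofReal_re, Complex.ofReal_im,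
      Complex.neg_re, Complex.neg_im, Complex.add_re, Complex.add_im, Complex.I_re,
      Complex.I_im]
    ring
  have him : (((Real.log n : ℝ) : ℂ) * -((σ:ℂ) + (a:ℂ)*I)).im = -(a * Real.log n) := by
    simp only [Complex.mul_re, Complex.mul_im, Complex.ofReal_re, Complex.ofReal_im,
      Complex.neg_re, Complex.neg_im, Complex.add_re, Complex.add_im, Complex.I_re,
      Complex.I_im]
    ring
  rw [hre, him, Real.cos_neg]
  congr 1
  rw [Real.rpow_def_of_pos hx0]
  ring_nf


end CosSumAux

open Finset Complex CosSumAux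


/-- **Lemma 2.8, first case.** There is an absolute constant `C` such that for every real
`a` with `0 < |a| ≤ 1/100` and every `z ≥ 3`,
`∑_{p ≤ z} cos(a log p)/p ≤ log(min{1/|a|, log z}) + C`. -/
theorem cos_sum_over_primes_small :
    ∃ C : ℝ, ∀ a : ℝ, 0 < |a| → |a| ≤ 1 / 100 → ∀ z : ℝ, 3 ≤ z →
      ∑ p ∈ (Finset.Iic ⌊z⌋₊).filter Nat.Prime,
          Real.cos (a * Real.log p) / (p : ℝ)
        ≤ Real.log (min (1 / |a|) (Real.log z)) + C := by
  obtain ⟨Cz, hCz1, hCz⟩ := zeta_bound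
  refine ⟨Real.log Cz + 14, ?_⟩
  intro a ha0 ha1 z hz
  have hz0 : (0:ℝ) < z := by linarith
  have hlogz : 0 < Real.log z := Real.log_pos (by linarith)
  have hlogz1 : 1 ≤ Real.log z := by
    rw [Real.le_log_iff_exp_le hz0]
    linarith [Real.exp_one_lt_d9]
  set δ : ℝ := 1/Real.log z with hδ
  have hδ0 : 0 < δ := by positivity
  have hδ1 : δ ≤ 1 := by rw [hδ, div_le_one hlogz]; exact hlogz1
  set σ : ℝ := 1 + δ with hσdef
  have hσ1 : 1 < σ := by rw [hσdef]; linarith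
  have hσ2 : σ ≤ 2 := by rw [hσdef]; linarith
  set s : ℂ := (σ:ℂ) + (a:ℂ)*I with hs
  have hsre : s.re = σ := by simp [hs]
  have hsim : s.im = a := by simp [hs]
  have hs1re : (s - 1).re = δ := by simp [hs, hσdef]
  have hs1im : (s - 1).im = a := by simp [hs]
  have hdδ : δ ≤ ‖s - 1‖ := by
    calc δ = |(s-1).re| := by rw [hs1re, abs_of_pos hδ0]
      _ ≤ ‖s-1‖ := Complex.abs_re_le_norm _
  have hda : |a| ≤ ‖s - 1‖ := by
    calc |a| = |(s-1).im| := by rw [hs1im]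
      _ ≤ ‖s-1‖ := Complex.abs_im_le_norm _
  have hd0 : 0 < ‖s - 1‖ := lt_of_lt_of_le hδ0 hdδ
  -- zeta bound at s
  have hζb : ‖riemannZeta s‖ ≤ Cz / ‖s - 1‖ :=
    hCz s (by rw [hsre]; exact hσ1) (by rw [hsre]; exact hσ2)
      (by rw [hsim]; exact ha0) (by rw [hsim]; exact ha1)
  have hζ0 : 0 < ‖riemannZeta s‖ := by
    rw [norm_pos_iff]
    exact riemannZeta_ne_zero_of_one_lt_re (by rw [hsre]; exact hσ1)
  -- log of zeta bound
  have hlogζ : Real.log (‖riemannZeta s‖)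
      ≤ Real.log Cz + Real.log (min (1/|a|) (Real.log z)) := by
    have h1 : Real.log (‖riemannZeta s‖) ≤ Real.log (Cz / ‖s-1‖) :=
      Real.log_le_log hζ0 hζb
    have h2 : Real.log (Cz / ‖s-1‖) = Real.log Cz + Real.log (‖s-1‖)⁻¹ := by
      rw [div_eq_mul_inv, Real.log_mul (by linarith) (by positivity)]
    have h3 : Real.log (‖s-1‖)⁻¹ ≤ Real.log (min (1/|a|) (Real.log z)) := by
      apply Real.log_le_log (by positivity)
      apply le_min
      · rw [one_div]
        exact inv_anti₀ ha0 hda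
      · have : (‖s-1‖)⁻¹ ≤ δ⁻¹ := inv_anti₀ hδ0 hdδ
        rw [hδ, one_div, inv_inv] at this
        exact this
    linarith
  -- the sums
  have hPz : (Finset.Iic ⌊z⌋₊).filter Nat.Prime = Pz z := rfl
  rw [hPz]
  -- pointwise: cos/p ≤ p^{-σ} cos + (1/p - p^{-σ})
  have hps : ∀ p ∈ Pz z, (p:ℝ) ^ (-σ) ≤ 1/(p:ℝ) ∧ (0:ℝ) < p := by
    intro p hp
    have hp2 : (2:ℕ) ≤ p := ((mem_Pz hz0.le).1 hp).1.two_le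
    have hp0 : (0:ℝ) < p := by exact_mod_cast Nat.lt_of_lt_of_le two_pos hp2
    have hp1 : (1:ℝ) ≤ p := by exact_mod_cast Nat.one_le_of_lt hp2
    constructor
    · calc (p:ℝ) ^ (-σ) ≤ (p:ℝ) ^ (-1:ℝ) :=
            Real.rpow_le_rpow_of_exponent_le hp1 (by linarith)
        _ = 1/(p:ℝ) := by rw [Real.rpow_neg_one, one_div]
    · exact hp0
  have step1 : ∑ p ∈ Pz z, Real.cos (a * Real.log p) / (p : ℝ)
      ≤ ∑ p ∈ Pz z, (p:ℝ) ^ (-σ) * Real.cos (a * Real.log p)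
        + ∑ p ∈ Pz z, (1/(p:ℝ) - (p:ℝ) ^ (-σ)) := by
    rw [← Finset.sum_add_distrib]
    apply Finset.sum_le_sum
    intro p hp
    obtain ⟨h1, hp0⟩ := hps p hp
    have hcos1 : Real.cos (a * Real.log p) ≤ 1 := Real.cos_le_one _
    have hcos2 : -1 ≤ Real.cos (a * Real.log p) := Real.neg_one_le_cos _
    have : Real.cos (a * Real.log p) / (p:ℝ)
        = Real.cos (a * Real.log p) * (1/(p:ℝ)) := by ring
    rw [this]
    nlinarith [Real.rpow_nonneg hp0.le (-σ)]
  -- E bound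
  have stepE : ∑ p ∈ Pz z, (1/(p:ℝ) - (p:ℝ) ^ (-σ)) ≤ 8 := by
    have hpt : ∀ p ∈ Pz z, 1/(p:ℝ) - (p:ℝ) ^ (-σ) ≤ δ * (Real.log p / p) := by
      intro p hp
      obtain ⟨h1, hp0⟩ := hps p hp
      have hsplit : (p:ℝ) ^ (-σ) = (1/(p:ℝ)) * (p:ℝ) ^ (-δ) := by
        rw [hσdef, show -(1+δ) = (-1) + (-δ) by ring, Real.rpow_add hp0,
          Real.rpow_neg_one, one_div]
      have hexp : 1 - δ * Real.log p ≤ (p:ℝ) ^ (-δ) := by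
        rw [Real.rpow_def_of_pos hp0]
        have := Real.add_one_le_exp (Real.log p * (-δ))
        linarith
      rw [hsplit]
      have h2 : 1 - (p:ℝ)^(-δ) ≤ δ * Real.log p := by linarith
      have h3 : 1/(p:ℝ) - 1/(p:ℝ) * (p:ℝ)^(-δ) = (1/(p:ℝ)) * (1 - (p:ℝ)^(-δ)) := by ring
      rw [h3]
      calc (1/(p:ℝ)) * (1 - (p:ℝ)^(-δ)) ≤ (1/(p:ℝ)) * (δ * Real.log p) := by
            apply mul_le_mul_of_nonneg_left h2 (by positivity)
        _ = δ * (Real.log p / p) := by ring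
    calc ∑ p ∈ Pz z, (1/(p:ℝ) - (p:ℝ) ^ (-σ))
        ≤ ∑ p ∈ Pz z, δ * (Real.log p / p) := Finset.sum_le_sum hpt
      _ = δ * ∑ p ∈ Pz z, Real.log p / p := by rw [Finset.mul_sum]
      _ ≤ δ * (4 * (Real.log z + 1)) := by
          apply mul_le_mul_of_nonneg_left (mertens1 hz) hδ0.le
      _ ≤ 8 := by
          have hδlog : δ * Real.log z = 1 := by
            rw [hδ, div_mul_cancel₀]
            exact hlogz.ne'
          nlinarith
  -- re identification and prime-type sums
  set g : Nat.Primes → ℂ := fun q => ((q : ℕ) : ℂ) ^ (-s) with hgdef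
  have hgsum : Summable g := summable_primes_cpow (by rw [hsre]; exact hσ1)
  have hresum : Summable (fun q : Nat.Primes => (g q).re) :=
    (Complex.hasSum_re hgsum.hasSum).summable
  set F : Finset Nat.Primes :=
    (Pz z).attach.image (fun x => (id ⟨x.1, ((mem_Pz hz0.le).1 x.2).1⟩ : Nat.Primes)) with hF
  have hFsum : ∑ q ∈ F, (g q).re = ∑ p ∈ Pz z, (p:ℝ) ^ (-σ) * Real.cos (a * Real.log p) := by
    rw [hF, Finset.sum_image (by
      intro x _ y _ hxy
      exact Subtype.ext (congrArg (fun q : Nat.Primes => (q : ℕ)) hxy))]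
    rw [← Finset.sum_attach (Pz z) (fun p => (p:ℝ) ^ (-σ) * Real.cos (a * Real.log p))]
    apply Finset.sum_congr rfl
    intro x _
    have hx0 : 0 < (x.1 : ℕ) := ((mem_Pz hz0.le).1 x.2).1.pos
    exact (cpow_re_eq hx0 σ a).trans rfl |> fun h => by
      exact h
  have hcompl : ∀ q : Nat.Primes, q ∉ F → z < ((q:ℕ):ℝ) := by
    intro q hq
    by_contra hle
    push_neg at hle
    apply hq
    rw [hF, Finset.mem_image]
    have hmem : (q:ℕ) ∈ Pz z := (mem_Pz hz0.le).2 ⟨q.2, hle⟩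
    exact ⟨⟨(q:ℕ), hmem⟩, Finset.mem_attach _ _, Subtype.ext rfl⟩
  -- tail bound
  have hsumσ : Summable (fun q : Nat.Primes => ((q:ℕ):ℝ) ^ (-σ)) :=
    Nat.Primes.summable_rpow.2 (by linarith)
  have hsubσ : Summable (fun x : {q : Nat.Primes // q ∉ F} => ((x.1.1:ℕ):ℝ) ^ (-σ)) := by
    have := hsumσ.subtype {q : Nat.Primes | q ∉ F}
    exact this
  have htail : ∑' (x : {q : Nat.Primes // q ∉ F}), ((x.1.1:ℕ):ℝ) ^ (-σ) ≤ 4 := by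
    apply Summable.tsum_le_of_sum_le hsubσ
    intro H
    have himg : ∑ x ∈ H, ((x.1.1:ℕ):ℝ) ^ (-σ)
        = ∑ n ∈ H.image (fun x => (x.1.1 : ℕ)), (n:ℝ) ^ (-σ) := by
      rw [Finset.sum_image (by
        intro x _ y _ hxy
        exact Subtype.ext (Subtype.ext hxy))]
    rw [himg]
    have := tail_le hz (H.image (fun x => (x.1.1 : ℕ))) (by
      intro n hn
      rw [Finset.mem_image] at hn
      obtain ⟨x, _, rfl⟩ := hn
      exact ⟨x.1.2, hcompl x.1 x.2⟩)
    rw [hσdef]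
    exact this
  have htail2 : -(4:ℝ) ≤ ∑' (x : {q : Nat.Primes // q ∉ F}), (g x.1).re := by
    have hpt : ∀ x : {q : Nat.Primes // q ∉ F}, -(((x.1.1:ℕ):ℝ) ^ (-σ)) ≤ (g x.1).re := by
      intro x
      have h1 : |(g x.1).re| ≤ ‖g x.1‖ := Complex.abs_re_le_norm _
      have h2 : ‖g x.1‖ = ((x.1.1:ℕ):ℝ) ^ (-σ) := by
        rw [hgdef]
        rw [norm_primes_cpow x.1, hsre]
      rw [h2] at h1
      linarith [abs_le.1 h1]
    have hsubre : Summable (fun x : {q : Nat.Primes // q ∉ F} => (g x.1).re) := by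
      have := hresum.subtype {q : Nat.Primes | q ∉ F}
      exact this
    have hts := Summable.tsum_le_tsum hpt hsubσ.neg hsubre
    rw [tsum_neg] at hts
    linarith [htail]
  -- combine
  have hsplit := Summable.sum_add_tsum_compl (s := F) hresum
  have hstep3 : ∑ q ∈ F, (g q).re
      ≤ (∑' q : Nat.Primes, (g q).re) + 4 := by
    have h4 : -(4:ℝ) ≤ ∑' (x : ↥(↑F : Set Nat.Primes)ᶜ), (g x.1).re := by
      have := htail2
      convert this using 1
      rfl
    linarith [hsplit, h4]
  have hre_tsum : (∑' q : Nat.Primes, (g q).re) = (∑' q : Nat.Primes, g q).re :=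
    (Complex.re_tsum hgsum).symm
  have hfinal1 : (∑' q : Nat.Primes, g q).re
      ≤ Real.log (‖riemannZeta s‖) + 2 :=
    re_tsum_primes_le (by rw [hsre]; exact hσ1)
  calc ∑ p ∈ Pz z, Real.cos (a * Real.log p) / (p : ℝ)
      ≤ ∑ p ∈ Pz z, (p:ℝ) ^ (-σ) * Real.cos (a * Real.log p)
        + ∑ p ∈ Pz z, (1/(p:ℝ) - (p:ℝ) ^ (-σ)) := step1
    _ ≤ (∑ q ∈ F, (g q).re) + 8 := by rw [hFsum]; linarith
    _ ≤ ((∑' q : Nat.Primes, (g q).re) + 4) + 8 := by linarith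
    _ ≤ (Real.log (‖riemannZeta s‖) + 2) + 12 := by
        rw [hre_tsum]; linarith
    _ ≤ (Real.log Cz + Real.log (min (1/|a|) (Real.log z)) + 2) + 12 := by linarith
    _ = Real.log (min (1/|a|) (Real.log z)) + (Real.log Cz + 14) := by ring
end
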